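/- Let 0 < p < 1 < q, μ₁ > 0, μ₂ > 0 and τ ∈ (0,1). Then T₁ < T₂, where T₁ = max{ [Γ((1-p)/(q-p))·Γ((q-1)/(q-p)) / (μ₁(q-p))]·(μ₁/(τμ₂))^((1-p)/(q-p)) , [Γ((1-p)/(q-p))·Γ((q-1)/(q-p)) / (τμ₁(q-p))]·(τμ₁/μ₂)^((1-p)/(q-p)) } and T₂ = 1/(τμ₁(1-p)) + 1/(τμ₂(q-1)). That is, the settling-time estimate T₁ of the improved fixed-time stability theorem is strictly smaller (less conservative) than the classical estimate T₂ (Remark 1). -/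

import Mathlib

open Real

lemma sin_ge_quadratic {a : ℝ} (h0 : 0 < a) (h1 : a < 1) :
    π * (a * (1 - a)) ≤ sin (π * a) := by
  have key : ∀ x : ℝ, 0 < x → x ≤ 1/2 → π * (x * (1 - x)) ≤ sin (π * x) := by
    intro x hx hx2
    have hπ0 : (0:ℝ) < π := pi_pos
    rcases le_or_gt x (3/10) with hc | hc
    · -- cubic bound
      have hπ : π ≤ 3.15 := le_of_lt pi_lt_d2
      have hx1 : π * x ≤ 1 := by nlinarith
      have hcube := Real.sin_gt_sub_cube (x := π * x) (by positivity)
      have h4 : π^2 * x ≤ 4 := by nlinarith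
      have : 4 * (π * x^2) ≥ π^3 * x^3 := by
        nlinarith [mul_nonneg (sub_nonneg.2 h4) (le_of_lt (mul_pos hπ0 (mul_pos hx hx)))]
      nlinarith
    · -- concavity: sin (π x) ≥ sin (3π/10) = (1+√5)/4 ≥ π/4 ≥ π x (1-x)
      have h1 : sin (3*π/10) = (1 + √5)/4 := by
        have : (3*π/10 : ℝ) = π/2 - π/5 := by ring
        rw [this, Real.sin_pi_div_two_sub, Real.cos_pi_div_five]
      set t : ℝ := (7/10 - x) / (4/10) with ht
      have ht0 : 0 ≤ t := div_nonneg (by linarith) (by norm_num)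
      have ht1 : t ≤ 1 := by
        rw [ht, div_le_one (by norm_num)]; linarith
      have hcomb : t * (3*π/10) + (1 - t) * (7*π/10) = π * x := by
        rw [ht]; ring
      have hmem1 : (3*π/10 : ℝ) ∈ Set.Icc 0 π := by
        constructor <;> nlinarith
      have hmem2 : (7*π/10 : ℝ) ∈ Set.Icc 0 π := by
        constructor <;> nlinarith
      have hcon := strictConcaveOn_sin_Icc.concaveOn.2 hmem1 hmem2 (show (0:ℝ) ≤ t from ht0) (show (0:ℝ) ≤ 1 - t by linarith)
        (show t + (1 - t) = 1 by ring)
      simp only [smul_eq_mul] at hcon; rw [hcomb] at hcon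
      have h2 : sin (7*π/10) = (1 + √5)/4 := by
        have : (7*π/10 : ℝ) = π - 3*π/10 := by ring
        rw [this, Real.sin_pi_sub, h1]
      rw [h1, h2] at hcon
      have hcon' : (1 + √5)/4 ≤ sin (π * x) := by nlinarith
      have h5 : (2.2:ℝ) ≤ √5 := by
        rw [show (2.2:ℝ) = √(2.2^2) from (Real.sqrt_sq (by norm_num)).symm]
        exact Real.sqrt_le_sqrt (by norm_num)
      have hq : x * (1 - x) ≤ 1/4 := by nlinarith
      calc π * (x * (1-x)) ≤ π/4 := by nlinarith
        _ ≤ (1 + √5)/4 := by nlinarith [pi_lt_d2]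
        _ ≤ sin (π * x) := hcon'
  rcases le_or_gt a (1/2) with h | h
  · exact key a h0 h
  · have h' := key (1 - a) (by linarith) (by linarith)
    have hs : sin (π * (1 - a)) = sin (π * a) := by
      rw [show π * (1 - a) = π - π * a by ring, Real.sin_pi_sub]
    rw [hs] at h'
    calc π * (a * (1 - a)) = π * ((1-a) * (1 - (1-a))) := by ring
      _ ≤ sin (π * a) := h'

lemma core_ineq {a r c : ℝ} (ha0 : 0 < a) (ha1 : a < 1) (hr : 0 < r)
    (hc0 : 0 < c) (hc1 : c < 1) :
    Real.Gamma a * Real.Gamma (1 - a) * (r ^ a * c) < 1 / a + r / (1 - a) := by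
  have hb : 0 < 1 - a := by linarith
  have hk : 0 < a * (1 - a) := by positivity
  have hπ0 : (0:ℝ) < π := pi_pos
  have hsin : 0 < sin (π * a) :=
    sin_pos_of_pos_of_lt_pi (by positivity) (by nlinarith)
  have hG : Real.Gamma a * Real.Gamma (1 - a) = π / sin (π * a) :=
    Real.Gamma_mul_Gamma_one_sub a
  have hGpos : 0 < Real.Gamma a * Real.Gamma (1 - a) := by rw [hG]; positivity
  have hGle : Real.Gamma a * Real.Gamma (1 - a) ≤ 1 / (a * (1 - a)) := by
    rw [hG, div_le_div_iff₀ hsin hk]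
    nlinarith [sin_ge_quadratic ha0 ha1]
  have hra : 0 < r ^ a := rpow_pos_of_pos hr a
  have amgm := Real.geom_mean_le_arith_mean2_weighted (le_of_lt hb) (le_of_lt ha0)
    (p₁ := 1 / (a * (1 - a))) (p₂ := r / (a * (1 - a)))
    (by positivity) (by positivity) (by ring)
  have hgm : (1 / (a * (1 - a))) ^ (1 - a) * (r / (a * (1 - a))) ^ a
      = r ^ a / (a * (1 - a)) := by
    rw [div_rpow (by norm_num) (le_of_lt hk), div_rpow (le_of_lt hr) (le_of_lt hk),
      one_rpow]
    rw [div_mul_div_comm, one_mul, ← Real.rpow_add hk]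
    norm_num
  have hsum : (1 - a) * (1 / (a * (1 - a))) + a * (r / (a * (1 - a)))
      = 1 / a + r / (1 - a) := by
    field_simp
  rw [hgm, hsum] at amgm
  calc Real.Gamma a * Real.Gamma (1 - a) * (r ^ a * c)
      < Real.Gamma a * Real.Gamma (1 - a) * r ^ a := by nlinarith [mul_pos hGpos hra]
    _ ≤ (1 / (a * (1 - a))) * r ^ a :=
        mul_le_mul_of_nonneg_right hGle (le_of_lt hra)
    _ = r ^ a / (a * (1 - a)) := by ring
    _ ≤ 1 / a + r / (1 - a) := amgm

/-- Remark 1: the improved settling-time estimate `T₁` is strictly smaller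
than the classical estimate `T₂`. -/
theorem improved_estimate_lt_classical
    (p q μ₁ μ₂ τ : ℝ)
    (hp : 0 < p) (hp1 : p < 1) (hq : 1 < q)
    (hμ₁ : 0 < μ₁) (hμ₂ : 0 < μ₂)
    (hτ : τ ∈ Set.Ioo (0 : ℝ) 1) :
    max ((Real.Gamma ((1 - p) / (q - p)) * Real.Gamma ((q - 1) / (q - p))
            / (μ₁ * (q - p))) * (μ₁ / (τ * μ₂)) ^ ((1 - p) / (q - p)))
        ((Real.Gamma ((1 - p) / (q - p)) * Real.Gamma ((q - 1) / (q - p))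
            / (τ * μ₁ * (q - p))) * (τ * μ₁ / μ₂) ^ ((1 - p) / (q - p)))
      < 1 / (τ * μ₁ * (1 - p)) + 1 / (τ * μ₂ * (q - 1)) := by
  obtain ⟨hτ0, hτ1⟩ := hτ
  have hqp : 0 < q - p := by linarith
  set a : ℝ := (1 - p) / (q - p) with ha_def
  have ha0 : 0 < a := div_pos (by linarith) hqp
  have ha1 : a < 1 := by
    rw [ha_def, div_lt_one hqp]; linarith
  have hb0 : 0 < 1 - a := by linarith
  have hba : (q - 1) / (q - p) = 1 - a := by
    rw [ha_def]; field_simp; ring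
  set G : ℝ := Real.Gamma a * Real.Gamma (1 - a) with hG_def
  -- atoms
  set A1 : ℝ := μ₁ ^ a with hA1
  set A2 : ℝ := μ₂ ^ a with hA2
  set At : ℝ := τ ^ a with hAt
  have hA1p : 0 < A1 := rpow_pos_of_pos hμ₁ a
  have hA2p : 0 < A2 := rpow_pos_of_pos hμ₂ a
  have hAtp : 0 < At := rpow_pos_of_pos hτ0 a
  have hr : (0:ℝ) < μ₁ / μ₂ := by positivity
  have e1 : (μ₁ / (τ * μ₂)) ^ a = A1 / (At * A2) := by
    rw [hA1, hA2, hAt, div_rpow (le_of_lt hμ₁) (by positivity),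
      mul_rpow (le_of_lt hτ0) (le_of_lt hμ₂)]
  have e2 : (τ * μ₁ / μ₂) ^ a = At * A1 / A2 := by
    rw [hA1, hA2, hAt, div_rpow (by positivity) (le_of_lt hμ₂),
      mul_rpow (le_of_lt hτ0) (le_of_lt hμ₁)]
  have e3 : (μ₁ / μ₂) ^ a = A1 / A2 := by
    rw [hA1, hA2, div_rpow (le_of_lt hμ₁) (le_of_lt hμ₂)]
  have e4 : τ ^ (1 - a) = τ / At := by
    rw [hAt, Real.rpow_sub hτ0, Real.rpow_one]
  -- RHS identity
  have hp' : 1 - p = a * (q - p) := by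
    rw [ha_def]; field_simp
  have hq' : q - 1 = (1 - a) * (q - p) := by
    rw [← hba]; field_simp
  have hRHS : 1 / (τ * μ₁ * (1 - p)) + 1 / (τ * μ₂ * (q - 1))
      = (1 / a + (μ₁ / μ₂) / (1 - a)) / (τ * μ₁ * (q - p)) := by
    rw [hp', hq']; field_simp
  -- branch identities
  have key1 : G / (μ₁ * (q - p)) * ((μ₁ / (τ * μ₂)) ^ a)
      = (G * ((μ₁ / μ₂) ^ a * τ ^ (1 - a))) / (τ * μ₁ * (q - p)) := by
    rw [e1, e3, e4]; field_simp
  have key2 : G / (τ * μ₁ * (q - p)) * ((τ * μ₁ / μ₂) ^ a)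
      = (G * ((μ₁ / μ₂) ^ a * τ ^ a)) / (τ * μ₁ * (q - p)) := by
    rw [e2, e3]; field_simp; ring
  have hD : 0 < τ * μ₁ * (q - p) := by positivity
  rw [hba, hRHS, max_lt_iff]
  constructor
  · rw [key1]
    exact div_lt_div_of_pos_right
      (core_ineq ha0 ha1 hr (rpow_pos_of_pos hτ0 _) (rpow_lt_one (le_of_lt hτ0) hτ1 hb0)) hD
  · rw [key2]
    exact div_lt_div_of_pos_right
      (core_ineq ha0 ha1 hr (rpow_pos_of_pos hτ0 _) (rpow_lt_one (le_of_lt hτ0) hτ1 ha0)) hD
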